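/- Let n ≥ 2 and let N be a permutation-invariant norm on ℝ^n. Then N((1/n)·(1,1,…,1) − e_1) ≤ ((n−1)/n)·N(e_1 − e_2), where e_1, e_2 are standard basis vectors; in particular this quantity is strictly smaller than N(e_1 − e_2). -/

import Mathlib

def IsNorm {n : ℕ} (N : (Fin n → ℝ) → ℝ) : Prop :=
  (∀ x, N x = 0 ↔ x = 0) ∧
  (∀ (c : ℝ) (x : Fin n → ℝ), N (c • x) = |c| * N x) ∧
  (∀ x y : Fin n → ℝ, N (x + y) ≤ N x + N y)

def PermInvariant {n : ℕ} (N : (Fin n → ℝ) → ℝ) : Prop :=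
  ∀ (σ : Equiv.Perm (Fin n)) (x : Fin n → ℝ), N (fun i => x (σ i)) = N x

lemma N_sum_le {n : ℕ} (N : (Fin n → ℝ) → ℝ) (hN : IsNorm N)
    {ι : Type*} (s : Finset ι) (f : ι → Fin n → ℝ) :
    N (∑ k ∈ s, f k) ≤ ∑ k ∈ s, N (f k) := by
  classical
  induction s using Finset.induction with
  | empty => simp [(hN.1 0).2 rfl]
  | insert _ _ h ih =>
    rw [Finset.sum_insert h, Finset.sum_insert h]
    exact le_trans (hN.2.2 _ _) (by linarith)

/-- For a permutation-invariant norm `N` on `ℝ^n` (`n ≥ 2`) one has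
`N((1/n)·(1,…,1) − e₁) ≤ ((n−1)/n)·N(e₁ − e₂) < N(e₁ − e₂)`. -/
theorem center_dist_le_of_permInvariant (n : ℕ) (hn : 2 ≤ n)
    (N : (Fin n → ℝ) → ℝ) (hN : IsNorm N) (hperm : PermInvariant N) :
    N (((1 : ℝ) / n) • (fun _ => (1 : ℝ)) - Pi.single (⟨0, by omega⟩ : Fin n) 1) ≤
        (((n : ℝ) - 1) / n) *
          N (Pi.single (⟨0, by omega⟩ : Fin n) 1 - Pi.single (⟨1, by omega⟩ : Fin n) 1) ∧
      N (((1 : ℝ) / n) • (fun _ => (1 : ℝ)) - Pi.single (⟨0, by omega⟩ : Fin n) 1) <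
        N (Pi.single (⟨0, by omega⟩ : Fin n) 1 - Pi.single (⟨1, by omega⟩ : Fin n) 1) := by
  classical
  obtain ⟨h0, hsmul, hadd⟩ := hN
  set i0 : Fin n := ⟨0, by omega⟩ with hi0
  set i1 : Fin n := ⟨1, by omega⟩ with hi1
  have hi01 : i0 ≠ i1 := by simp [hi0, hi1, Fin.ext_iff]
  have hnpos : (0:ℝ) < n := by positivity
  have hNneg : ∀ x, N (-x) = N x := by
    intro x
    have := hsmul (-1) x
    simpa using this
  set d : Fin n → ℝ := Pi.single i0 1 - Pi.single i1 1 with hd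
  have hterm : ∀ k : Fin n, k ≠ i0 →
      N (Pi.single k 1 - Pi.single i0 1) = N d := by
    intro k hk
    rw [← hNneg]
    have heq : -(Pi.single k (1:ℝ) - Pi.single i0 1) =
        fun i => d ((Equiv.swap i1 k) i) := by
      funext i
      have hfix : (Equiv.swap i1 k) i0 = i0 :=
        Equiv.swap_apply_of_ne_of_ne hi01 (Ne.symm hk)
      have h1 : (Equiv.swap i1 k) i = i0 ↔ i = i0 := by
        rw [Equiv.swap_apply_eq_iff, hfix]
      have h2 : (Equiv.swap i1 k) i = i1 ↔ i = k := by
        rw [Equiv.swap_apply_eq_iff, Equiv.swap_apply_left]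
      simp only [hd, Pi.sub_apply, Pi.neg_apply, Pi.single_apply, h1, h2]
      by_cases hki : i = i0
      · simp [hki, (show i0 ≠ k from Ne.symm hk)]
      · by_cases hkk : i = k
        · simp [hkk, hki, (show k ≠ i0 from hk), hkk ▸ hki]
        · simp [hki, hkk]
    rw [heq, hperm]
  have hNnonneg : ∀ x, 0 ≤ N x := by
    intro x
    have h := hadd x (-x)
    rw [add_neg_cancel, (h0 0).2 rfl, hNneg] at h
    linarith
  set s : Finset (Fin n) := Finset.univ.erase i0 with hs
  have hcard : s.card = n - 1 := by
    simp [hs, Finset.card_erase_of_mem]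
  have hcast : ((n - 1 : ℕ) : ℝ) = (n : ℝ) - 1 := by
    push_cast [Nat.cast_sub (by omega : 1 ≤ n)]; ring
  have hdecomp : (((1 : ℝ) / n) • (fun _ => (1 : ℝ)) - Pi.single i0 1) =
      ((1:ℝ)/n) • ∑ k ∈ s, (Pi.single k (1:ℝ) - Pi.single i0 1) := by
    funext i
    simp only [Pi.smul_apply, Pi.sub_apply, Finset.sum_apply, Pi.single_apply,
      smul_eq_mul, Finset.sum_sub_distrib, Finset.sum_ite_eq, Finset.sum_const,
      nsmul_eq_mul, hcard, hcast]
    by_cases hii : i = i0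
    · simp only [hii, hs, Finset.mem_erase, ne_eq, not_true_eq_false, false_and,
        if_false, if_pos rfl]
      field_simp
      simp [hcast]
    · simp only [hs, Finset.mem_erase, ne_eq, hii, not_false_eq_true, Finset.mem_univ,
        and_self, if_true, if_neg hii]
      field_simp
      simp [hcast, Pi.single_apply, hii]
  have hsumeq : ∑ k ∈ s, N (Pi.single k (1:ℝ) - Pi.single i0 1) = ((n:ℝ) - 1) * N d := by
    rw [Finset.sum_congr rfl (fun k hk => hterm k (Finset.ne_of_mem_erase hk)),
      Finset.sum_const, hcard, nsmul_eq_mul, hcast]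
  have hineq : N (((1 : ℝ) / n) • (fun _ => (1 : ℝ)) - Pi.single i0 1) ≤
      (((n:ℝ) - 1)/n) * N d := by
    rw [hdecomp, hsmul]
    have hsumle := N_sum_le N ⟨h0, hsmul, hadd⟩ s
      (fun k => Pi.single k (1:ℝ) - Pi.single i0 1)
    rw [hsumeq] at hsumle
    have habs : |(1:ℝ)/n| = 1/n := abs_of_pos (by positivity)
    rw [habs]
    calc (1/(n:ℝ)) * N (∑ k ∈ s, (Pi.single k (1:ℝ) - Pi.single i0 1))
        ≤ (1/(n:ℝ)) * (((n:ℝ) - 1) * N d) := by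
          apply mul_le_mul_of_nonneg_left hsumle (by positivity)
      _ = (((n:ℝ) - 1)/n) * N d := by ring
  have hdne : d ≠ 0 := by
    intro h
    have := congrFun h i1
    simp [hd, Pi.single_apply, hi01, Ne.symm hi01] at this
  have hdpos : 0 < N d := lt_of_le_of_ne (hNnonneg d) (fun h => hdne ((h0 d).1 h.symm))
  refine ⟨hineq, lt_of_le_of_lt hineq ?_⟩
  have hfrac : ((n:ℝ) - 1)/n < 1 := by
    rw [div_lt_one hnpos]; linarith
  nlinarith
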